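/- For a qubit channel with Bloch transformation w ↦ t + Tw, the expansion coefficient of the trace distance equals the smallest singular value of T: inf over distinct qubit states ρ,σ of ‖N(ρ)−N(σ)‖₁ / ‖ρ−σ‖₁ = σ_min(T). -/

import Mathlib

open Matrix
open scoped ComplexOrder

/-- The trace norm `‖M‖₁ = Tr √(MᴴM)`. -/
noncomputable def traceNorm {n : Type} [Fintype n] [DecidableEq n] (M : Matrix n n ℂ) : ℝ :=
  (((Matrix.posSemidef_conjTranspose_mul_self M).1.eigenvectorUnitary : Matrix n n ℂ) *
    diagonal (((↑) : ℝ → ℂ) ∘ (Real.sqrt ·) ∘ (Matrix.posSemidef_conjTranspose_mul_self M).1.eigenvalues) *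
    (star ((Matrix.posSemidef_conjTranspose_mul_self M).1.eigenvectorUnitary : Matrix n n ℂ))).trace.re

/-- The Euclidean norm on `ℝ³`. -/
noncomputable def euclNorm (v : Fin 3 → ℝ) : ℝ := Real.sqrt (∑ i, v i ^ 2)

/-- The qubit state with Bloch vector `w`: `½(I + w·σ⃗)`. -/
noncomputable def bloch (w : Fin 3 → ℝ) : Matrix (Fin 2) (Fin 2) ℂ :=
  (1 / 2 : ℂ) • ((1 : Matrix (Fin 2) (Fin 2) ℂ)
    + (w 0 : ℂ) • !![0, 1; 1, 0]
    + (w 1 : ℂ) • !![0, -Complex.I; Complex.I, 0]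
    + (w 2 : ℂ) • !![1, 0; 0, -1])

/-- Trace distance of qubit states equals the Euclidean distance of Bloch vectors. -/
lemma key (w w' : Fin 3 → ℝ) :
    traceNorm (bloch w - bloch w') = euclNorm (w - w') := by
  set a := w 0 - w' 0
  set b := w 1 - w' 1
  set c := w 2 - w' 2
  set s : ℝ := a^2 + b^2 + c^2 with hs
  have hs0 : 0 ≤ s := by positivity
  set M : Matrix (Fin 2) (Fin 2) ℂ := bloch w - bloch w' with hM
  have hMM : Mᴴ * M = ((s/4 : ℝ) : ℂ) • (1 : Matrix (Fin 2) (Fin 2) ℂ) := by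
    ext i j
    fin_cases i <;> fin_cases j <;>
      simp [hM, bloch, Matrix.mul_apply, Fin.sum_univ_two, Matrix.one_apply, hs, a, b, c,
        Complex.ext_iff, ← Complex.ofReal_pow] <;> ring_nf <;>
      simp [Complex.ext_iff, ← Complex.ofReal_pow]
  have hB : Matrix.PosSemidef (((Real.sqrt s / 2 : ℝ) : ℂ) • (1 : Matrix (Fin 2) (Fin 2) ℂ)) := by
    rw [smul_one_eq_diagonal]
    refine Matrix.PosSemidef.diagonal fun i => ?_
    rw [Complex.le_def]
    simp [Real.sqrt_nonneg, div_nonneg]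
  have hsq : (((Real.sqrt s / 2 : ℝ) : ℂ) • (1 : Matrix (Fin 2) (Fin 2) ℂ)) ^ 2 = Mᴴ * M := by
    rw [hMM, smul_pow, one_pow, ← Complex.ofReal_pow, div_pow, Real.sq_sqrt hs0]
    congr 1
    push_cast
    ring
  have hev : ∀ i, (Matrix.posSemidef_conjTranspose_mul_self M).1.eigenvalues i = s/4 := by
    intro i
    have h := (Matrix.posSemidef_conjTranspose_mul_self M).1.eigenvalues_mem_spectrum_real i
    have hA : Mᴴ * M = algebraMap ℝ (Matrix (Fin 2) (Fin 2) ℂ) (s/4) := by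
      rw [hMM, Algebra.algebraMap_eq_smul_one, Complex.coe_smul]
    have h2 : spectrum ℝ (Mᴴ * M) = {s/4} := by rw [hA, spectrum.scalar_eq]
    rw [h2] at h
    exact h
  rw [traceNorm, Matrix.trace_mul_cycle, Unitary.coe_star_mul_self, Matrix.one_mul]
  simp only [Matrix.trace, Matrix.diag, Matrix.diagonal_apply_eq, Function.comp_apply, hev]
  rw [show s/4 = (Real.sqrt s/2)^2 by rw [div_pow, Real.sq_sqrt hs0]; norm_num,
    Real.sqrt_sq (by positivity)]
  have : euclNorm (w - w') = Real.sqrt s := by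
    rw [euclNorm, Fin.sum_univ_three]
    simp [a, b, c, hs]
  rw [this]
  simp [Matrix.trace, Matrix.diag, Fin.sum_univ_two, Complex.ofReal_re]
  ring

lemma euclNorm_pos {v : Fin 3 → ℝ} (hv : v ≠ 0) : 0 < euclNorm v := by
  rw [euclNorm]
  apply Real.sqrt_pos.2
  rcases Function.ne_iff.1 hv with ⟨i, hi⟩
  exact Finset.sum_pos' (fun j _ => sq_nonneg _)
    ⟨i, Finset.mem_univ i, by simpa using pow_pos (abs_pos.2 hi) 2⟩

lemma euclNorm_smul (c : ℝ) (hc : 0 ≤ c) (v : Fin 3 → ℝ) :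
    euclNorm (c • v) = c * euclNorm v := by
  simp only [euclNorm, Pi.smul_apply, smul_eq_mul, mul_pow, ← Finset.mul_sum]
  rw [Real.sqrt_mul (sq_nonneg c), Real.sqrt_sq hc]

/-- For a qubit channel acting on Bloch vectors as `w ↦ t + Tw`, the trace-distance
expansion coefficient equals the smallest singular value of `T`, i.e. the infimum of
`‖Tv‖₂/‖v‖₂` over nonzero `v`. -/
theorem stmt17 (t : Fin 3 → ℝ) (T : Matrix (Fin 3) (Fin 3) ℝ) :
    sInf {r : ℝ | ∃ w w' : Fin 3 → ℝ, euclNorm w ≤ 1 ∧ euclNorm w' ≤ 1 ∧ w ≠ w' ∧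
        r = traceNorm (bloch (t + T.mulVec w) - bloch (t + T.mulVec w'))
            / traceNorm (bloch w - bloch w')}
      = sInf {r : ℝ | ∃ v : Fin 3 → ℝ, v ≠ 0 ∧ r = euclNorm (T.mulVec v) / euclNorm v} := by
  congr 1
  ext r
  constructor
  · rintro ⟨w, w', -, -, hne, rfl⟩
    refine ⟨w - w', sub_ne_zero.2 hne, ?_⟩
    rw [key, key]
    have h : (t + T.mulVec w) - (t + T.mulVec w') = T.mulVec (w - w') := by
      rw [Matrix.mulVec_sub]; abel
    rw [h]
  · rintro ⟨v, hv, rfl⟩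
    have hpos := euclNorm_pos hv
    set c : ℝ := 1 / (2 * euclNorm v) with hc
    have hc0 : 0 < c := by positivity
    refine ⟨c • v, 0, ?_, by simp [euclNorm], ?_, ?_⟩
    · rw [euclNorm_smul c hc0.le]
      rw [hc]
      rw [div_mul_eq_mul_div, one_mul, div_le_one (by positivity)]
      linarith
    · simp only [ne_eq, smul_eq_zero, not_or]
      exact ⟨hc0.ne', hv⟩
    · rw [key, key]
      have h1 : (t + T.mulVec (c • v)) - (t + T.mulVec 0) = c • T.mulVec v := by
        simp [Matrix.mulVec_smul]
      have h2 : (c • v) - (0 : Fin 3 → ℝ) = c • v := by simp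
      rw [h1, h2, euclNorm_smul c hc0.le, euclNorm_smul c hc0.le,
        mul_div_mul_left _ _ hc0.ne']
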